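/- Completeness of the majorization lattice (supremum): For any nonempty subset Q of the probability simplex in ℝ^n, there exists a probability vector v such that q ≺ v for every q ∈ Q, and for any probability vector y with q ≺ y for all q ∈ Q, one has v ≺ y. -/

import Mathlib

open Finset

noncomputable def pMax {n : ℕ} (x : Fin n → ℝ) (k : ℕ) : ℝ :=
  sSup {s : ℝ | ∃ I : Finset (Fin n), I.card = k ∧ s = ∑ i ∈ I, x i}


def Maj {n : ℕ} (x y : Fin n → ℝ) : Prop :=
  (∀ k ≤ n, pMax x k ≤ pMax y k) ∧ (∑ i, x i = ∑ i, y i)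

def ProbVec {n : ℕ} (p : Fin n → ℝ) : Prop :=
  (∀ i, 0 ≤ p i) ∧ ∑ i, p i = 1

section helpers

variable {n : ℕ} (x : Fin n → ℝ) (k : ℕ)

lemma pMaxSet_finite :
    ({s : ℝ | ∃ I : Finset (Fin n), I.card = k ∧ s = ∑ i ∈ I, x i}).Finite := by
  apply Set.Finite.subset (Set.finite_range (fun I : Finset (Fin n) => ∑ i ∈ I, x i))
  rintro s ⟨I, _, rfl⟩; exact ⟨I, rfl⟩

lemma pMaxSet_nonempty (hk : k ≤ n) :
    ({s : ℝ | ∃ I : Finset (Fin n), I.card = k ∧ s = ∑ i ∈ I, x i}).Nonempty := by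
  obtain ⟨I, -, hI⟩ := Finset.exists_subset_card_eq (s := (univ : Finset (Fin n))) (n := k)
    (by simpa using hk)
  exact ⟨∑ i ∈ I, x i, I, hI, rfl⟩

lemma sum_le_pMax {I : Finset (Fin n)} (hI : I.card = k) : ∑ i ∈ I, x i ≤ pMax x k :=
  le_csSup (pMaxSet_finite x k).bddAbove ⟨I, hI, rfl⟩

lemma pMax_mem (hk : k ≤ n) :
    ∃ I : Finset (Fin n), I.card = k ∧ pMax x k = ∑ i ∈ I, x i :=
  (pMaxSet_nonempty x k hk).csSup_mem (pMaxSet_finite x k)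

lemma pMax_zero : pMax x 0 = 0 := by
  obtain ⟨I, hI, h⟩ := pMax_mem x 0 (Nat.zero_le n)
  rw [h, Finset.card_eq_zero.mp hI, Finset.sum_empty]

lemma pMax_top : pMax x n = ∑ i, x i := by
  obtain ⟨I, hI, h⟩ := pMax_mem x n le_rfl
  have : I = univ := Finset.eq_univ_of_card I (by simpa using hI)
  rw [h, this]

lemma pMax_mono (hx : ∀ i, 0 ≤ x i) (hk : k + 1 ≤ n) : pMax x k ≤ pMax x (k + 1) := by
  obtain ⟨I, hI, h⟩ := pMax_mem x k (le_of_lt hk)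
  have : I ≠ univ := fun hu => by simp [hu, Finset.card_univ] at hI; omega
  obtain ⟨i, hi⟩ : ∃ i, i ∉ I := by
    by_contra hc; push_neg at hc; exact this (Finset.eq_univ_iff_forall.mpr hc)
  have h2 : (insert i I).card = k + 1 := by rw [Finset.card_insert_of_notMem hi, hI]
  calc pMax x k = ∑ j ∈ I, x j := h
    _ ≤ ∑ j ∈ insert i I, x j := by rw [Finset.sum_insert hi]; nlinarith [hx i]
    _ ≤ pMax x (k+1) := sum_le_pMax x (k+1) h2

lemma pMax_concave (hk : k + 1 ≤ n) (hkpos : 1 ≤ k) :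
    pMax x (k - 1) + pMax x (k + 1) ≤ pMax x k + pMax x k := by
  obtain ⟨I, hI, hIs⟩ := pMax_mem x (k + 1) hk
  obtain ⟨J, hJ, hJs⟩ := pMax_mem x (k - 1) (by omega)
  obtain ⟨i, hiI, hiJ⟩ : ∃ i ∈ I, i ∉ J := by
    by_contra hc; push_neg at hc
    have := Finset.card_le_card hc; omega
  have h1 : (insert i J).card = k := by rw [Finset.card_insert_of_notMem hiJ, hJ]; omega
  have h2 : (I.erase i).card = k := by rw [Finset.card_erase_of_mem hiI, hI]; omega
  have e1 : ∑ j ∈ insert i J, x j = x i + ∑ j ∈ J, x j := Finset.sum_insert hiJ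
  have e2 : ∑ j ∈ I.erase i, x j = ∑ j ∈ I, x j - x i := by
    rw [Finset.sum_erase_eq_sub hiI]
  have := sum_le_pMax x k h1
  have := sum_le_pMax x k h2
  rw [hIs, hJs]; linarith

lemma strictMono_val_le {k : ℕ} (f : Fin k → Fin n) (hf : StrictMono f) :
    ∀ j : Fin k, (j : ℕ) ≤ (f j : ℕ) := by
  intro j
  induction' hj : (j : ℕ) with m ih generalizing j
  · omega
  · have hm : m < k := by omega
    have := ih ⟨m, hm⟩ rfl
    have hlt : f ⟨m, hm⟩ < f j := hf (by simp [Fin.lt_def, hj])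
    have := Fin.lt_def.mp hlt
    omega

/-- For an antitone vector, `pMax` is the sum of the first `k` entries. -/
lemma pMax_antitone (hmono : ∀ i j : Fin n, (i : ℕ) ≤ j → x j ≤ x i) (hk : k ≤ n) :
    pMax x k = ∑ j : Fin k, x (Fin.castLE hk j) := by
  apply le_antisymm
  · obtain ⟨I, hI, hIs⟩ := pMax_mem x k hk
    rw [hIs]
    have hcard : I.card = k := hI
    set e := I.orderIsoOfFin hcard with he
    have hsm : StrictMono (fun j : Fin k => (e j : Fin n)) :=
      fun a b hab => by exact_mod_cast (e.strictMono hab)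
    calc ∑ i ∈ I, x i = ∑ j : Fin k, x (e j) := by
          rw [← Finset.sum_attach I (fun i => x i)]
          exact (Fintype.sum_equiv e.toEquiv _ _ (fun j => rfl)).symm
      _ ≤ ∑ j : Fin k, x (Fin.castLE hk j) := by
          apply Finset.sum_le_sum
          intro j _
          exact hmono _ _ (by simpa using strictMono_val_le _ hsm j)
  · have hinj : Function.Injective (Fin.castLE hk) := Fin.castLE_injective hk
    have : ((univ : Finset (Fin k)).image (Fin.castLE hk)).card = k := by
      rw [Finset.card_image_of_injective _ hinj, Finset.card_univ, Fintype.card_fin]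
    calc ∑ j : Fin k, x (Fin.castLE hk j)
        = ∑ i ∈ (univ : Finset (Fin k)).image (Fin.castLE hk), x i :=
          (Finset.sum_image (fun a _ b _ h => hinj h)).symm
      _ ≤ pMax x k := sum_le_pMax x k this

lemma pMax_le_sum (hx : ∀ i, 0 ≤ x i) : pMax x k ≤ ∑ i, x i := by
  rcases le_or_gt k n with hk | hk
  · obtain ⟨I, hI, h⟩ := pMax_mem x k hk
    rw [h]
    exact Finset.sum_le_sum_of_subset_of_nonneg (Finset.subset_univ I) (fun i _ _ => hx i)
  · have : ({s : ℝ | ∃ I : Finset (Fin n), I.card = k ∧ s = ∑ i ∈ I, x i}) = ∅ := by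
      ext s; simp only [Set.mem_setOf_eq, Set.mem_empty_iff_false, iff_false]
      rintro ⟨I, hI, -⟩
      have := Finset.card_le_univ I
      simp [hI] at this; omega
    rw [pMax, this, Real.sSup_empty]
    exact Finset.sum_nonneg fun i _ => hx i

end helpers


/-- completeness of the majorization lattice (supremum).  Any nonempty
set `Q` of probability vectors has a least upper bound `v` under majorization:
`q ≺ v` for all `q ∈ Q`, and any probability vector `y` with `q ≺ y` for all `q ∈ Q`
satisfies `v ≺ y`. -/
theorem majorization_lattice_supremum {n : ℕ} (Q : Set (Fin n → ℝ)) (hQne : Q.Nonempty)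
    (hQ : ∀ q ∈ Q, ProbVec q) :
    ∃ v : Fin n → ℝ, ProbVec v ∧ (∀ q ∈ Q, Maj q v) ∧
      (∀ y : Fin n → ℝ, ProbVec y → (∀ q ∈ Q, Maj q y) → Maj v y) := by
  obtain ⟨q₀, hq₀⟩ := hQne
  rcases Nat.eq_zero_or_pos n with rfl | hn
  · have := (hQ q₀ hq₀).2; simp at this
  -- the top element e
  set e : Fin n → ℝ := fun i => if i = ⟨0, hn⟩ then (1 : ℝ) else 0 with he
  have he_nonneg : ∀ i, 0 ≤ e i := by intro i; simp only [he]; split <;> norm_num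
  have he_sum : ∑ i, e i = 1 := by simp [he]
  have he_prob : ProbVec e := ⟨he_nonneg, he_sum⟩
  have he_ub : ∀ q ∈ Q, Maj q e := by
    intro q hq
    refine ⟨fun k hk => ?_, by rw [(hQ q hq).2, he_sum]⟩
    rcases Nat.eq_zero_or_pos k with rfl | hkpos
    · simp [pMax_zero]
    · have h1 : pMax q k ≤ 1 := by
        have := pMax_le_sum q k (hQ q hq).1
        rwa [(hQ q hq).2] at this
      have h2 : (1 : ℝ) ≤ pMax e k := by
        obtain ⟨I, hsub, -, hcard⟩ := Finset.exists_subsuperset_card_eq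
          (s := ({⟨0, hn⟩} : Finset (Fin n))) (t := (univ : Finset (Fin n))) (n := k)
          (Finset.subset_univ _) (by simp; omega) (by simpa using hk)
        have : (1 : ℝ) ≤ ∑ i ∈ I, e i := by
          have h0 : e ⟨0, hn⟩ = 1 := by simp [he]
          calc (1:ℝ) = e ⟨0, hn⟩ := h0.symm
            _ ≤ ∑ i ∈ I, e i := Finset.single_le_sum (fun i _ => he_nonneg i)
                (hsub (Finset.mem_singleton_self _))
        exact this.trans (sum_le_pMax e k hcard)
      linarith
  -- the set of upper bounds and the infimum function g
  set T : ℕ → Set ℝ := fun k =>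
    {t : ℝ | ∃ y : Fin n → ℝ, ProbVec y ∧ (∀ q ∈ Q, Maj q y) ∧ t = pMax y k} with hT
  set g : ℕ → ℝ := fun k => sInf (T k) with hg
  have hTne : ∀ k, (T k).Nonempty := fun k => ⟨pMax e k, e, he_prob, he_ub, rfl⟩
  have hTbdd : ∀ k, k ≤ n → BddBelow (T k) := by
    intro k hk
    refine ⟨pMax q₀ k, ?_⟩
    rintro t ⟨y, hy, hub, rfl⟩
    exact (hub q₀ hq₀).1 k hk
  have hg_le : ∀ k, k ≤ n → ∀ y : Fin n → ℝ, ProbVec y → (∀ q ∈ Q, Maj q y) →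
      g k ≤ pMax y k := fun k hk y hy hub => csInf_le (hTbdd k hk) ⟨y, hy, hub, rfl⟩
  have hle_g : ∀ k, ∀ c : ℝ, (∀ y : Fin n → ℝ, ProbVec y → (∀ q ∈ Q, Maj q y) →
      c ≤ pMax y k) → c ≤ g k := by
    intro k c h
    apply le_csInf (hTne k)
    rintro t ⟨y, hy, hub, rfl⟩
    exact h y hy hub
  have hg0 : g 0 = 0 := by
    apply le_antisymm
    · have := hg_le 0 (Nat.zero_le n) e he_prob he_ub
      rwa [pMax_zero] at this
    · exact hle_g 0 0 fun y _ _ => by rw [pMax_zero]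
  have hgn : g n = 1 := by
    apply le_antisymm
    · have := hg_le n le_rfl e he_prob he_ub
      rwa [pMax_top, he_sum] at this
    · exact hle_g n 1 fun y hy _ => by rw [pMax_top, hy.2]
  have hgmono : ∀ k, k + 1 ≤ n → g k ≤ g (k + 1) := by
    intro k hk
    apply hle_g
    intro y hy hub
    exact (hg_le k (le_of_lt hk) y hy hub).trans (pMax_mono y k hy.1 hk)
  have hgconc : ∀ k, 1 ≤ k → k + 1 ≤ n → g (k - 1) + g (k + 1) ≤ g k + g k := by
    intro k hk1 hk
    have : (g (k - 1) + g (k + 1)) / 2 ≤ g k := by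
      apply hle_g
      intro y hy hub
      have h1 := hg_le (k - 1) (by omega) y hy hub
      have h2 := hg_le (k + 1) hk y hy hub
      have h3 := pMax_concave y k hk hk1
      linarith
    linarith
  -- decreasing increments
  have hstep : ∀ d a : ℕ, a + d + 1 ≤ n → g (a + d + 1) - g (a + d) ≤ g (a + 1) - g a := by
    intro d
    induction d with
    | zero => intro a _; simp
    | succ m ih =>
      intro a h
      have h1 := hgconc (a + m + 1) (by omega) (by omega)
      have h2 := ih a (by omega)
      have e1 : a + m + 1 - 1 = a + m := by omega
      rw [e1] at h1
      have e2 : a + (m + 1) + 1 = a + m + 1 + 1 := by ring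
      have e3 : a + (m + 1) = a + m + 1 := by ring
      rw [e2, e3]
      linarith
  set v : Fin n → ℝ := fun i => g ((i : ℕ) + 1) - g (i : ℕ) with hv
  have hv_nonneg : ∀ i, 0 ≤ v i := by
    intro i
    have := hgmono i i.isLt
    simp only [hv]; linarith
  have hv_sum : ∑ i, v i = 1 := by
    rw [hv, Fin.sum_univ_eq_sum_range (fun i => g (i + 1) - g i) n,
      Finset.sum_range_sub g n, hgn, hg0]
    ring
  have hv_anti : ∀ i j : Fin n, (i : ℕ) ≤ (j : ℕ) → v j ≤ v i := by
    intro i j hij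
    have := hstep ((j : ℕ) - (i : ℕ)) (i : ℕ) (by omega)
    have e1 : (i : ℕ) + ((j : ℕ) - (i : ℕ)) = (j : ℕ) := by omega
    rw [e1] at this
    simpa [hv] using this
  have hpv : ∀ k, (hk : k ≤ n) → pMax v k = g k := by
    intro k hk
    rw [pMax_antitone v k hv_anti hk]
    have : ∀ j : Fin k, v (Fin.castLE hk j) = g ((j : ℕ) + 1) - g (j : ℕ) := fun j => rfl
    rw [Finset.sum_congr rfl (fun j _ => this j),
      Fin.sum_univ_eq_sum_range (fun i => g (i + 1) - g i) k,
      Finset.sum_range_sub g k, hg0]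
    ring
  refine ⟨v, ⟨hv_nonneg, hv_sum⟩, ?_, ?_⟩
  · intro q hq
    refine ⟨fun k hk => ?_, by rw [(hQ q hq).2, hv_sum]⟩
    rw [hpv k hk]
    exact hle_g k _ fun y hy hub => (hub q hq).1 k hk
  · intro y hy hub
    refine ⟨fun k hk => ?_, by rw [hv_sum, hy.2]⟩
    rw [hpv k hk]
    exact hg_le k hk y hy hub
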